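/- Let β, μ, b, K be positive reals with K > 1, and set a = ((K−1)β + b)/μ and c = (K−1)β/μ, and suppose β = μ c^a e^(−c) / γ(a,c), where γ is the lower incomplete Gamma function. Then the function G(z) = e^(c(z−1)) z^(−a) γ(a, zc)/γ(a,c) satisfies the ODE β − μ z G'(z) + (β(K−1)(z−1) − b) G(z) = 0 on (0,1], together with G(1) = 1. -/

import Mathlib

open Real

noncomputable def lowerGamma (a z : ℝ) : ℝ := ∫ t in (0:ℝ)..z, t ^ (a - 1) * Real.exp (-t)

lemma lg_hasDerivAt (a : ℝ) (ha : 0 < a) {x : ℝ} (hx : 0 < x) :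
    HasDerivAt (lowerGamma a) (x ^ (a - 1) * Real.exp (-x)) x := by
  apply intervalIntegral.integral_hasDerivAt_right
  · exact (intervalIntegral.intervalIntegrable_rpow' (by linarith)).mul_continuousOn
      (Continuous.continuousOn (by continuity))
  · exact ⟨Set.univ, Filter.univ_mem, (by fun_prop (disch := norm_num) : Measurable fun t : ℝ => t ^ (a-1) * Real.exp (-t)).aestronglyMeasurable⟩
  · exact ((Real.continuousAt_rpow_const x (a-1) (Or.inl hx.ne')).mul
      (Real.continuous_exp.continuousAt.comp (continuous_neg.continuousAt)))

theorem stmt4 (β μ b K : ℝ) (hβ : 0 < β) (hμ : 0 < μ) (hb : 0 < b) (hK : 1 < K)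
    (a c : ℝ) (ha : a = ((K - 1) * β + b) / μ) (hc : c = (K - 1) * β / μ)
    (hfix : β = μ * c ^ a * Real.exp (-c) / lowerGamma a c) :
    let G : ℝ → ℝ := fun z =>
      Real.exp (c * (z - 1)) * z ^ (-a) * lowerGamma a (z * c) / lowerGamma a c
    (∀ z ∈ Set.Ioc (0:ℝ) 1,
      β - μ * z * deriv G z + (β * (K - 1) * (z - 1) - b) * G z = 0) ∧ G 1 = 1 := by
  intro G
  have hΓ : lowerGamma a c ≠ 0 := by
    intro h; rw [h, div_zero] at hfix; linarith
  have ha0 : 0 < a := by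
    rw [ha]
    apply div_pos _ hμ
    nlinarith
  have hc0 : 0 < c := by
    rw [hc]
    apply div_pos _ hμ
    nlinarith
  have hμc : μ * c = (K - 1) * β := by rw [hc]; field_simp
  have hμa : μ * a = (K - 1) * β + b := by rw [ha]; field_simp
  have hβΓ : β * lowerGamma a c = μ * c ^ a * Real.exp (-c) := by
    rw [hfix]; field_simp
  refine ⟨fun z hz => ?_, ?_⟩
  · obtain ⟨hz0, hz1⟩ := hz
    have hzc : 0 < z * c := mul_pos hz0 hc0
    -- derivative of each factor
    have hE : HasDerivAt (fun z : ℝ => Real.exp (c * (z - 1)))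
        (Real.exp (c * (z - 1)) * (c * 1)) z :=
      (((hasDerivAt_id z).sub_const 1).const_mul c).exp
    have hP : HasDerivAt (fun z : ℝ => z ^ (-a)) (-a * z ^ (-a - 1)) z :=
      Real.hasDerivAt_rpow_const (Or.inl hz0.ne')
    have hg : HasDerivAt (fun z : ℝ => lowerGamma a (z * c))
        ((z * c) ^ (a - 1) * Real.exp (-(z * c)) * c) z :=
      by have h := (lg_hasDerivAt a ha0 hzc).comp z (hasDerivAt_mul_const (x := z) c); exact h
    have hG : HasDerivAt G
        ((((Real.exp (c * (z - 1)) * (c * 1)) * z ^ (-a)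
            + Real.exp (c * (z - 1)) * (-a * z ^ (-a - 1))) * lowerGamma a (z * c)
          + (Real.exp (c * (z - 1)) * z ^ (-a))
              * ((z * c) ^ (a - 1) * Real.exp (-(z * c)) * c)) / lowerGamma a c) z :=
      ((hE.mul hP).mul hg).div_const _
    have hD := hG.deriv
    rw [hD]
    -- key algebraic identities
    have k1 : z * z ^ (-a - 1) = z ^ (-a) := by
      nth_rewrite 1 [← Real.rpow_one z]
      rw [← Real.rpow_add hz0, show (1:ℝ) + (-a - 1) = -a by ring]
    have k2 : z ^ (-a) * (z * c) ^ (a - 1) * z = c ^ (a - 1) := by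
      rw [Real.mul_rpow hz0.le hc0.le]
      rw [mul_comm (z ^ (a-1)) (c ^ (a-1)), ← mul_assoc, mul_assoc _ _ z]
      nth_rewrite 3 [← Real.rpow_one z]
      rw [← Real.rpow_add hz0, mul_comm (z ^ (-a)), mul_assoc, ← Real.rpow_add hz0]
      norm_num
    have k3 : Real.exp (c * (z - 1)) * Real.exp (-(z * c)) = Real.exp (-c) := by
      rw [← Real.exp_add]; ring_nf
    have k4 : c ^ (a - 1) * c = c ^ a := by
      nth_rewrite 2 [← Real.rpow_one c]
      rw [← Real.rpow_add hc0]; norm_num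
    -- the third-term cancellation:
    have key : μ * z * ((Real.exp (c * (z - 1)) * z ^ (-a))
        * ((z * c) ^ (a - 1) * Real.exp (-(z * c)) * c)) = β * lowerGamma a c := by
      rw [hβΓ]
      calc μ * z * ((Real.exp (c * (z - 1)) * z ^ (-a))
            * ((z * c) ^ (a - 1) * Real.exp (-(z * c)) * c))
          = μ * (z ^ (-a) * (z * c) ^ (a - 1) * z)
              * (Real.exp (c * (z - 1)) * Real.exp (-(z * c))) * c := by ring
        _ = μ * c ^ (a - 1) * Real.exp (-c) * c := by rw [k2, k3]
        _ = μ * (c ^ (a - 1) * c) * Real.exp (-c) := by ring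
        _ = μ * c ^ a * Real.exp (-c) := by rw [k4]
    have numeq : μ * z * ((Real.exp (c * (z - 1)) * (c * 1) * z ^ (-a)
          + Real.exp (c * (z - 1)) * (-a * z ^ (-a - 1))) * lowerGamma a (z * c)
        + Real.exp (c * (z - 1)) * z ^ (-a) * ((z * c) ^ (a - 1) * Real.exp (-(z * c)) * c))
        = (β * (K - 1) * (z - 1) - b) * (Real.exp (c * (z - 1)) * z ^ (-a) * lowerGamma a (z * c))
          + β * lowerGamma a c := by
      linear_combination key
        - μ * a * Real.exp (c * (z - 1)) * lowerGamma a (z * c) * k1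
        + z * Real.exp (c * (z - 1)) * z ^ (-a) * lowerGamma a (z * c) * hμc
        - Real.exp (c * (z - 1)) * z ^ (-a) * lowerGamma a (z * c) * hμa
    show β - μ * z * _ + _ * (Real.exp (c * (z - 1)) * z ^ (-a) * lowerGamma a (z * c) / lowerGamma a c) = 0
    field_simp
    linear_combination -numeq
  · show Real.exp (c * (1 - 1)) * (1:ℝ) ^ (-a) * lowerGamma a (1 * c) / lowerGamma a c = 1
    rw [Real.one_rpow, one_mul]
    simp [div_self hΓ]
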